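/- Let R = ℤ[d₂, d₃, d₄, y]/(2d₃, y·d₃, y² − 4d₄) with grading deg d_i = 2i, deg y = 4. Suppose φ: R → ℤ[p₁, e, b]/(2b) is the graded ring homomorphism with φ(d₂) = −p₁, φ(d₃) = b², φ(d₄) = e², φ(y) = 2e (degrees: p₁, e have degree 4, b has degree 3). Then φ is well-defined (respects the relations 2d₃, y·d₃, y² − 4d₄) and its image is the subring generated by p₁, e², 2e, b². -/

import Mathlib

open MvPolynomial

/-- The defining ideal of `H^*(BSO₄; ℤ) = ℤ[p₁, e, b]/(2b)`, with variables
`X 0 = p₁`, `X 1 = e = √p₂`, `X 2 = b = β̃w₂`. -/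
noncomputable def cohIdeal : Ideal (MvPolynomial (Fin 3) ℤ) :=
  Ideal.span {2 * X 2}

/-- The integral cohomology ring of `BSO₄`. -/
noncomputable abbrev CohS : Type := MvPolynomial (Fin 3) ℤ ⧸ cohIdeal

/-- The defining ideal of `CH^*(BSO₄) = ℤ[d₂,d₃,d₄,y]/(2d₃, y·d₃, y² - 4d₄)`,
with variables `X 0 = d₂`, `X 1 = d₃`, `X 2 = d₄`, `X 3 = y`. -/
noncomputable def chowIdeal : Ideal (MvPolynomial (Fin 4) ℤ) :=
  Ideal.span {2 * X 1, X 3 * X 1, X 3 ^ 2 - 4 * X 2}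

/-- The Chow ring of `BSO₄`. -/
noncomputable abbrev ChowR : Type := MvPolynomial (Fin 4) ℤ ⧸ chowIdeal

section aux

noncomputable def gmap : Fin 4 → CohS :=
  ![-(Ideal.Quotient.mk cohIdeal (X 0)),
    Ideal.Quotient.mk cohIdeal (X 2) ^ 2,
    Ideal.Quotient.mk cohIdeal (X 1) ^ 2,
    2 * Ideal.Quotient.mk cohIdeal (X 1)]

noncomputable def fmap : MvPolynomial (Fin 4) ℤ →+* CohS :=
  (MvPolynomial.aeval gmap).toRingHom

lemma two_b_zero : (2 : CohS) * Ideal.Quotient.mk cohIdeal (X 2) = 0 := by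
  rw [← map_ofNat (Ideal.Quotient.mk cohIdeal) 2, ← map_mul]
  exact Ideal.Quotient.eq_zero_iff_mem.2 (Ideal.subset_span (by simp))

lemma fmap_ker : ∀ x ∈ chowIdeal, fmap x = 0 := by
  intro x hx
  refine Submodule.span_induction (p := fun x _ => fmap x = 0) ?_ (by simp) ?_ ?_ hx
  · rintro y (rfl | rfl | rfl) <;>
      simp only [fmap, AlgHom.toRingHom_eq_coe, RingHom.coe_coe, map_mul, map_sub, map_pow,
        map_ofNat, aeval_X, gmap, Matrix.cons_val_zero, Matrix.cons_val_one, Matrix.head_cons,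
        Matrix.cons_val_two, Matrix.tail_cons, Matrix.cons_val_three]
    · linear_combination Ideal.Quotient.mk cohIdeal (X 2) * two_b_zero
    · linear_combination (Ideal.Quotient.mk cohIdeal (X 1) *
        Ideal.Quotient.mk cohIdeal (X 2)) * two_b_zero
    · ring
  · intro a b _ _ ha hb; rw [map_add, ha, hb, add_zero]
  · intro a b _ hb; rw [smul_eq_mul, map_mul, hb, mul_zero]

end aux

/-- There is a well-defined (cycle class) ring map `φ : CH^*(BSO₄) → H^*(BSO₄;ℤ)` with
`φ d₂ = -p₁`, `φ d₃ = b²`, `φ d₄ = e²`, `φ y = 2e`, and its image is the subring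
generated by `p₁, e², 2e, b²`. -/
theorem stmt_15 :
    ∃ φ : ChowR →+* CohS,
      φ (Ideal.Quotient.mk chowIdeal (X 0)) = -(Ideal.Quotient.mk cohIdeal (X 0)) ∧
      φ (Ideal.Quotient.mk chowIdeal (X 1)) = Ideal.Quotient.mk cohIdeal (X 2) ^ 2 ∧
      φ (Ideal.Quotient.mk chowIdeal (X 2)) = Ideal.Quotient.mk cohIdeal (X 1) ^ 2 ∧
      φ (Ideal.Quotient.mk chowIdeal (X 3)) = 2 * Ideal.Quotient.mk cohIdeal (X 1) ∧
      Set.range ⇑φ =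
        ↑(Subring.closure
          {Ideal.Quotient.mk cohIdeal (X 0),
           Ideal.Quotient.mk cohIdeal (X 1) ^ 2,
           2 * Ideal.Quotient.mk cohIdeal (X 1),
           Ideal.Quotient.mk cohIdeal (X 2) ^ 2}) := by
  refine ⟨Ideal.Quotient.lift chowIdeal fmap fmap_ker, ?_, ?_, ?_, ?_, ?_⟩
  · simpa [fmap, gmap] using rfl
  · simpa [fmap, gmap] using rfl
  · simpa [fmap, gmap] using rfl
  · simpa [fmap, gmap] using rfl
  · have hrange : Set.range ⇑(Ideal.Quotient.lift chowIdeal fmap fmap_ker) =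
        Set.range ⇑fmap := by
      ext z
      constructor
      · rintro ⟨q, rfl⟩
        obtain ⟨p, rfl⟩ := Ideal.Quotient.mk_surjective q
        exact ⟨p, rfl⟩
      · rintro ⟨p, rfl⟩
        exact ⟨Ideal.Quotient.mk chowIdeal p, rfl⟩
    rw [hrange]
    have h1 : Set.range ⇑fmap = ↑(Subring.closure (Set.range gmap)) := by
      have := Algebra.adjoin_range_eq_range_aeval ℤ gmap
      have h2 := congrArg (fun s : Subalgebra ℤ CohS => (s : Set CohS)) this
      erw [Algebra.adjoin_int] at h2
      rw [show Set.range ⇑fmap = ((MvPolynomial.aeval gmap).range : Set CohS) from rfl, ← h2]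
      rfl
    rw [h1]
    have hg : Set.range gmap =
        {-(Ideal.Quotient.mk cohIdeal (X 0)),
         Ideal.Quotient.mk cohIdeal (X 2) ^ 2,
         Ideal.Quotient.mk cohIdeal (X 1) ^ 2,
         2 * Ideal.Quotient.mk cohIdeal (X 1)} := by
      ext z
      simp only [gmap, Set.mem_range, Set.mem_insert_iff, Set.mem_singleton_iff]
      constructor
      · rintro ⟨i, rfl⟩; fin_cases i <;> simp
      · rintro (rfl | rfl | rfl | rfl)
        exacts [⟨0, rfl⟩, ⟨1, rfl⟩, ⟨2, rfl⟩, ⟨3, rfl⟩]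
    rw [hg, SetLike.coe_set_eq]
    set p := Ideal.Quotient.mk cohIdeal (X 0)
    set e := Ideal.Quotient.mk cohIdeal (X 1)
    set b := Ideal.Quotient.mk cohIdeal (X 2)
    apply le_antisymm <;> rw [Subring.closure_le] <;> intro z hz <;>
      rcases hz with rfl | rfl | rfl | rfl
    · exact Subring.neg_mem _ (Subring.subset_closure (Set.mem_insert _ _))
    · exact Subring.subset_closure
        (Set.mem_insert_of_mem _ (Set.mem_insert_of_mem _ (Set.mem_insert_of_mem _ rfl)))
    · exact Subring.subset_closure (Set.mem_insert_of_mem _ (Set.mem_insert _ _))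
    · exact Subring.subset_closure
        (Set.mem_insert_of_mem _ (Set.mem_insert_of_mem _ (Set.mem_insert _ _)))
    · simpa using Subring.neg_mem _ (Subring.subset_closure (Set.mem_insert (-p) _))
    · exact Subring.subset_closure
        (Set.mem_insert_of_mem _ (Set.mem_insert_of_mem _ (Set.mem_insert _ _)))
    · exact Subring.subset_closure
        (Set.mem_insert_of_mem _ (Set.mem_insert_of_mem _ (Set.mem_insert_of_mem _ rfl)))
    · exact Subring.subset_closure (Set.mem_insert_of_mem _ (Set.mem_insert _ _))
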